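/- Let q be an odd prime power. The balanced characteristic vectors of the canonical cliques (quadratic lines) of the Paley graph P(q²) span the (−1+q)/2-eigenspace of its adjacency matrix. -/

import Mathlib

open Finset

private lemma isSq_inv {F : Type*} [Field F] {s : F} (h : IsSquare s) : IsSquare s⁻¹ := by
  rcases h with ⟨r, rfl⟩; exact ⟨r⁻¹, mul_inv r r⟩

private lemma isSq_mul_iff {F : Type*} [Field F] {s : F} (hs : s ≠ 0) (h : IsSquare s) (z : F) :
    IsSquare (s * z) ↔ IsSquare z := by
  constructor
  · intro h2
    have : z = s⁻¹ * (s * z) := by field_simp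
    rw [this]; exact (isSq_inv h).mul h2
  · exact fun h2 => h.mul h2

set_option maxHeartbeats 4000000 in
theorem paley_canonical_cliques_span_eigenspace (q : ℕ) (hq : IsPrimePow q) (hodd : Odd q)
    (F : Type*) [Field F] [Fintype F] [DecidableEq F] (hF : Fintype.card F = q ^ 2)
    (G : SimpleGraph F) [DecidableRel G.Adj]
    (hG : ∀ x y : F, G.Adj x y ↔ x ≠ y ∧ IsSquare (x - y))
    (K : Subfield F) (hK : Nat.card K = q) :
    Submodule.span ℝ {f : F → ℝ | ∃ a s : F, s ≠ 0 ∧ IsSquare s ∧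
        f = fun γ => Set.indicator {x : F | ∃ c ∈ K, x = a + s * c} (fun _ => (1 : ℝ)) γ - 1 / q}
      = Module.End.eigenspace (Matrix.toLin' (G.adjMatrix ℝ)) ((-1 + (q : ℝ)) / 2) := by
  classical
  have hq1 : 1 < q := hq.one_lt
  have hq3 : 3 ≤ q := by
    rcases hodd with ⟨k, hk⟩; omega
  -- char of F is odd
  have hcardodd : Fintype.card F % 2 = 1 := by
    rcases hodd with ⟨k, hk⟩
    subst hk; rw [hF]
    have e1 : (2 * k + 1) ^ 2 = 4 * (k * k + k) + 1 := by ring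
    omega
  have hchar : ringChar F ≠ 2 := by
    intro h
    have := FiniteField.even_card_of_char_two h
    omega
  haveI : Fintype K := Fintype.ofFinite K
  have hcardK : Fintype.card K = q := by rw [← Nat.card_eq_fintype_card, hK]
  -- every element of K is a square in F
  have hKsq : ∀ c : F, c ∈ K → IsSquare c := by
    intro c hc
    rcases eq_or_ne c 0 with rfl | hc0
    · exact ⟨0, (mul_zero 0).symm⟩
    · rw [FiniteField.isSquare_iff hchar hc0]
      have h1 : (⟨c, hc⟩ : K) ^ (q - 1) = 1 := by
        rw [← hcardK]
        exact FiniteField.pow_card_sub_one_eq_one _ (by simpa [Subtype.ext_iff] using hc0)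
      have h2 : c ^ (q - 1) = 1 := by
        have := congrArg (Subfield.subtype K) h1
        simpa using this
      have hdiv : Fintype.card F / 2 = (q - 1) * ((q + 1) / 2) := by
        rw [hF]; rcases hodd with ⟨k, hk⟩; subst hk
        have e1 : (2 * k + 1) ^ 2 = 4 * (k * k + k) + 1 := by ring
        have e2 : (2 * k + 1 + 1) / 2 = k + 1 := by omega
        have e3 : 2 * k + 1 - 1 = 2 * k := by omega
        rw [e1, e2, e3]
        have e4 : 2 * k * (k + 1) = 2 * (k * k + k) := by ring
        rw [e4]
        omega
      rw [hdiv, pow_mul, h2, one_pow]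
  have hneg1 : IsSquare (-1 : F) := by
    rw [FiniteField.isSquare_neg_one_iff, hF]
    rcases hodd with ⟨k, hk⟩; subst hk
    have e1 : (2 * k + 1) ^ 2 = 4 * (k * k + k) + 1 := by ring
    omega
  -- Finsets
  set Kfin : Finset F := Finset.univ.filter (· ∈ K) with hKfin
  have hmemK : ∀ c : F, c ∈ Kfin ↔ c ∈ K := by intro c; simp [hKfin]
  have hcardKfin : Kfin.card = q := by
    rw [hKfin, ← hcardK]
    exact (Fintype.card_of_subtype _ (fun x => by simp)).symm
  set Sfin : Finset F := Finset.univ.filter (fun z : F => z ≠ 0 ∧ IsSquare z) with hSfin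
  have hmemS : ∀ z : F, z ∈ Sfin ↔ z ≠ 0 ∧ IsSquare z := by intro z; simp [hSfin]
  have hcardS : Sfin.card * 2 = q ^ 2 - 1 := by
    have h1 : (Finset.univ.filter (fun z : F => z ≠ 0)).card = q ^ 2 - 1 := by
      rw [Finset.filter_ne' Finset.univ 0, Finset.card_erase_of_mem (Finset.mem_univ 0),
        Finset.card_univ, hF]
    have h2 : ∀ b ∈ Sfin,
        ((Finset.univ.filter (fun z : F => z ≠ 0)).filter (fun a => a * a = b)).card = 2 := by
      intro b hb
      rw [hmemS] at hb
      have hqc : quadraticChar F b = 1 := (quadraticChar_one_iff_isSquare hb.1).mpr hb.2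
      have hcs := quadraticChar_card_sqrts hchar b
      rw [hqc] at hcs
      have h4 : ({x : F | x ^ 2 = b}.toFinset).card = 2 := by exact_mod_cast hcs
      rw [← h4]
      congr 1
      ext a
      simp only [Finset.mem_filter, Finset.mem_univ, true_and, Set.mem_toFinset,
        Set.mem_setOf_eq, sq]
      constructor
      · rintro ⟨-, h⟩; exact h
      · intro h; exact ⟨fun h0 => hb.1 (by rw [← h, h0, mul_zero]), h⟩
    have h3 := Finset.card_eq_sum_card_fiberwise
      (f := fun z : F => z * z) (s := Finset.univ.filter (fun z : F => z ≠ 0)) (t := Sfin)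
      (fun x hx => by
        rw [Finset.mem_coe, hmemS]
        have hx0 : x ≠ 0 := by simpa using hx
        exact ⟨mul_ne_zero hx0 hx0, ⟨x, rfl⟩⟩)
    rw [Finset.sum_congr rfl h2, Finset.sum_const, smul_eq_mul, h1] at h3
    omega
  -- neighbors of x are x - S*
  have hnbr : ∀ x : F, G.neighborFinset x = Sfin.image (fun w => x - w) := by
    intro x
    ext u
    constructor
    · intro hu
      rw [SimpleGraph.mem_neighborFinset, hG] at hu
      exact Finset.mem_image.mpr ⟨x - u, (hmemS _).mpr ⟨sub_ne_zero.mpr hu.1, hu.2⟩, by ring⟩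
    · intro hu
      rcases Finset.mem_image.mp hu with ⟨w, hw, rfl⟩
      rw [hmemS w] at hw
      rw [SimpleGraph.mem_neighborFinset, hG]
      constructor
      · intro h
        apply hw.1
        have h2 : w = x - (x - w) := by ring
        rw [h2, ← h, sub_self]
      · simpa using hw.2
  have hdeg : ∀ x : F, (G.neighborFinset x).card = Sfin.card := by
    intro x
    rw [hnbr x]
    exact Finset.card_image_of_injOn (fun a _ b _ h => by
      have := sub_right_inj.mp h; exact this)
  have hnsum : ∀ (x : F) (g : F → ℝ),
      ∑ u ∈ G.neighborFinset x, g u = ∑ w ∈ Sfin, g (x - w) := by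
    intro x g
    rw [hnbr x]
    exact Finset.sum_image (fun a _ b _ h => sub_right_inj.mp h)
  -- all squares (including 0)
  have hcardSq : (Finset.univ.filter (fun z : F => IsSquare z)).card = Sfin.card + 1 := by
    have hins : (Finset.univ.filter (fun z : F => IsSquare z)) = insert (0:F) Sfin := by
      ext z
      simp only [Finset.mem_filter, Finset.mem_univ, true_and, Finset.mem_insert]
      constructor
      · intro hz
        rcases eq_or_ne z 0 with rfl | h
        · exact Or.inl rfl
        · exact Or.inr ((hmemS z).mpr ⟨h, hz⟩)
      · rintro (rfl | h)
        · exact ⟨0, (mul_zero 0).symm⟩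
        · exact ((hmemS z).mp h).2
    rw [hins, Finset.card_insert_of_notMem (by simp [hmemS])]
  -- the counting function
  set N : F → ℕ := fun y => (Kfin.filter (fun c => IsSquare (y - c))).card with hN
  -- invariance of N under affine K-transformations
  have hNinv : ∀ (a b y : F), a ∈ K → a ≠ 0 → b ∈ K → N (a * y + b) = N y := by
    intro a b y ha ha0 hb
    refine (Finset.card_nbij' (fun c => a * c + b) (fun c => (c - b) / a) ?_ ?_ ?_ ?_).symm
    · intro c hc
      rw [Finset.mem_coe, Finset.mem_filter] at hc ⊢
      rcases hc with ⟨hc1, hc2⟩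
      rw [hmemK] at hc1
      constructor
      · rw [hmemK]; exact K.add_mem (K.mul_mem ha hc1) hb
      · show IsSquare (a * y + b - (a * c + b))
        have he : a * y + b - (a * c + b) = a * (y - c) := by ring
        rw [he, isSq_mul_iff ha0 (hKsq a ha)]
        exact hc2
    · intro c hc
      rw [Finset.mem_coe, Finset.mem_filter] at hc ⊢
      rcases hc with ⟨hc1, hc2⟩
      rw [hmemK] at hc1
      constructor
      · rw [hmemK]; exact K.div_mem (K.sub_mem hc1 hb) ha
      · show IsSquare (y - (c - b) / a)
        have he : y - (c - b) / a = a⁻¹ * (a * y + b - c) := by field_simp; ring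
        rw [he, isSq_mul_iff (inv_ne_zero ha0) (isSq_inv (hKsq a ha))]
        exact hc2
    · intro c _
      show (a * c + b - b) / a = c
      field_simp
      ring
    · intro c _
      show a * ((c - b) / a) + b = c
      field_simp
      ring
  -- transitivity on the complement of K
  have htrans : ∀ y₁ y₂ : F, y₁ ∉ K → y₂ ∉ K →
      ∃ a b : F, a ∈ K ∧ a ≠ 0 ∧ b ∈ K ∧ y₂ = a * y₁ + b := by
    intro y₁ y₂ hy₁ hy₂
    have hinj2 : Function.Injective (fun p : K × K => (p.1 : F) * y₁ + (p.2 : F)) := by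
      rintro ⟨a, b⟩ ⟨a', b'⟩ h
      simp only at h
      by_cases haa : (a : F) = a'
      · have hbb : (b : F) = b' := by
          rw [haa] at h
          exact add_left_cancel h
        exact Prod.ext (Subtype.ext haa) (Subtype.ext hbb)
      · exfalso
        apply hy₁
        have hne : (a : F) - a' ≠ 0 := sub_ne_zero.mpr haa
        have hy : y₁ = ((b' : F) - b) / ((a : F) - a') := by
          field_simp
          linear_combination h
        rw [hy]
        exact K.div_mem (K.sub_mem b'.2 b.2) (K.sub_mem a.2 a'.2)
    have hcards : Fintype.card (K × K) = Fintype.card F := by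
      rw [Fintype.card_prod, hcardK, hF]; ring
    have hbij := (Fintype.bijective_iff_injective_and_card _).mpr ⟨hinj2, hcards⟩
    obtain ⟨⟨a, b⟩, hab⟩ := hbij.2 y₂
    simp only at hab
    refine ⟨a, b, a.2, ?_, b.2, hab.symm⟩
    intro ha0
    apply hy₂
    rw [← hab, ha0, zero_mul, zero_add]
    exact b.2
  -- value of N on K
  have hNK : ∀ y : F, y ∈ K → N y = q := by
    intro y hy
    rw [hN]
    simp only
    rw [Finset.filter_true_of_mem, hcardKfin]
    intro c hc
    rw [hmemK] at hc
    exact hKsq _ (K.sub_mem hy hc)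
  -- total sum of N over F
  have hNtot : ∑ y : F, N y = q * (Sfin.card + 1) := by
    have h1 : ∀ y : F, N y = ∑ c ∈ Kfin, if IsSquare (y - c) then 1 else 0 := by
      intro y; rw [hN]; simp only; rw [Finset.card_filter]
    calc ∑ y : F, N y = ∑ y : F, ∑ c ∈ Kfin, if IsSquare (y - c) then 1 else 0 := by
          exact Finset.sum_congr rfl (fun y _ => h1 y)
      _ = ∑ c ∈ Kfin, ∑ y : F, if IsSquare (y - c) then 1 else 0 := Finset.sum_comm
      _ = ∑ c ∈ Kfin, (Sfin.card + 1) := by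
          refine Finset.sum_congr rfl (fun c _ => ?_)
          rw [← Finset.card_filter, ← hcardSq]
          exact Finset.card_nbij' (fun y => y - c) (fun z => z + c)
            (fun y hy => by simpa using (Finset.mem_filter.mp hy).2)
            (fun z hz => by simp only [Finset.mem_filter, Finset.mem_univ, true_and] at hz ⊢; simpa using hz)
            (fun y _ => by ring) (fun z _ => by ring)
      _ = q * (Sfin.card + 1) := by rw [Finset.sum_const, hcardKfin, smul_eq_mul]
  -- the key count: N y = (q-1)/2 off K
  have hNval : ∀ y : F, y ∉ K → N y * 2 = q - 1 := by
    intro y hy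
    -- N is constant on the complement of K
    have hconst : ∀ z : F, z ∉ K → N z = N y := by
      intro z hz
      obtain ⟨a, b, ha, ha0, hb, hz2⟩ := htrans y z hy hz
      rw [hz2]
      exact hNinv a b y ha ha0 hb
    -- split the total sum
    have hsplit : ∑ z ∈ Finset.univ \ Kfin, N z + ∑ z ∈ Kfin, N z = ∑ z : F, N z :=
      Finset.sum_sdiff (Finset.subset_univ Kfin)
    have hsumK : ∑ z ∈ Kfin, N z = q * q := by
      rw [Finset.sum_congr rfl (fun z hz => hNK z ((hmemK z).mp hz)), Finset.sum_const,
        hcardKfin, smul_eq_mul]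
    have hsumA : ∑ z ∈ Finset.univ \ Kfin, N z = (q ^ 2 - q) * N y := by
      rw [Finset.sum_congr rfl (fun z hz => by
        have hz' : z ∉ K := by
          rw [Finset.mem_sdiff] at hz
          intro h; exact hz.2 ((hmemK z).mpr h)
        exact hconst z hz'), Finset.sum_const, smul_eq_mul]
      congr 1
      rw [Finset.card_sdiff_of_subset (Finset.subset_univ Kfin), Finset.card_univ, hF, hcardKfin]
    rw [hsumA, hsumK, hNtot] at hsplit
    -- now do arithmetic
    have e1 : ((q : ℤ) ^ 2 - q) * N y + q * q = q * (Sfin.card + 1) := by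
      have := congrArg (fun n : ℕ => (n : ℤ)) hsplit
      push_cast [Nat.cast_sub (le_of_lt (by nlinarith : q < q ^ 2))] at this
      convert this using 2
    have e2 : (Sfin.card : ℤ) * 2 = (q : ℤ) ^ 2 - 1 := by
      have := congrArg (fun n : ℕ => (n : ℤ)) hcardS
      push_cast [Nat.cast_sub (by nlinarith : 1 ≤ q ^ 2)] at this
      exact this
    have e3 : (q : ℤ) * ((q : ℤ) - 1) * ((N y : ℤ) * 2 - ((q : ℤ) - 1)) = 0 := by
      linear_combination 2 * e1 + (q : ℤ) * e2
    have e4 : (N y : ℤ) * 2 - ((q : ℤ) - 1) = 0 := by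
      have hq1' : (1 : ℤ) < q := by exact_mod_cast hq1
      rcases mul_eq_zero.mp e3 with h | h
      · exfalso
        rcases mul_eq_zero.mp h with h' | h' <;> omega
      · exact h
    omega
  -- real number versions
  have hq0R : (q : ℝ) ≠ 0 := by
    have : (0:ℝ) < q := by exact_mod_cast Nat.lt_of_lt_of_le (by norm_num) hq3
    exact ne_of_gt this
  have hSR : (Sfin.card : ℝ) = ((q : ℝ) ^ 2 - 1) / 2 := by
    have h := congrArg (fun n : ℕ => (n : ℝ)) hcardS
    have h1 : (1:ℕ) ≤ q ^ 2 := Nat.one_le_pow _ _ (by omega)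
    push_cast [Nat.cast_sub h1] at h
    linarith
  have hNR : ∀ y : F, y ∉ K → ((N y : ℝ)) = ((q : ℝ) - 1) / 2 := by
    intro y hy
    have h := congrArg (fun n : ℕ => (n : ℝ)) (hNval y hy)
    push_cast [Nat.cast_sub (le_of_lt hq1)] at h
    linarith
  apply le_antisymm
  · -- span ≤ eigenspace
    rw [Submodule.span_le]
    rintro f ⟨a, s, hs0, hssq, rfl⟩
    rw [SetLike.mem_coe, Module.End.mem_eigenspace_iff, Matrix.toLin'_apply]
    funext x
    rw [SimpleGraph.adjMatrix_mulVec_apply]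
    set Lset : Set F := {x : F | ∃ c ∈ K, x = a + s * c} with hLset
    have hLmem : ∀ u : F, u ∈ Lset ↔ ∃ c ∈ Kfin, a + s * c = u := by
      intro u
      simp only [hLset, Set.mem_setOf_eq, hmemK]
      constructor
      · rintro ⟨c, hc, rfl⟩; exact ⟨c, hc, rfl⟩
      · rintro ⟨c, hc, rfl⟩; exact ⟨c, hc, rfl⟩
    have hsplitsum : ∑ u ∈ G.neighborFinset x,
        (Set.indicator Lset (fun _ => (1:ℝ)) u - 1 / q)
        = (((G.neighborFinset x).filter (· ∈ Lset)).card : ℝ)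
          - (Sfin.card : ℝ) / q := by
      rw [Finset.sum_sub_distrib, Finset.sum_const, hdeg x]
      congr 1
      · rw [← Finset.sum_boole]
        refine Finset.sum_congr rfl fun u _ => ?_
        rw [Set.indicator_apply]
      · rw [nsmul_eq_mul]; ring
    rw [hsplitsum]
    by_cases hx : x ∈ Lset
    · -- x on the clique
      set Lfin : Finset F := Kfin.image (fun c => a + s * c) with hLfin
      have hLfin_mem : ∀ u : F, u ∈ Lfin ↔ u ∈ Lset := by
        intro u
        rw [hLfin, Finset.mem_image, hLmem]
      have hLcard : Lfin.card = q := by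
        rw [hLfin, Finset.card_image_of_injOn (fun c _ d _ h => by
          have := add_left_cancel h
          exact mul_left_cancel₀ hs0 this), hcardKfin]
      have hfilter : (G.neighborFinset x).filter (· ∈ Lset) = Lfin.erase x := by
        ext u
        rw [Finset.mem_filter, Finset.mem_erase, SimpleGraph.mem_neighborFinset, hG,
          hLfin_mem]
        constructor
        · rintro ⟨⟨hne, -⟩, hu⟩
          exact ⟨fun h => hne h.symm, hu⟩
        · rintro ⟨hne, hu⟩
          refine ⟨⟨fun h => hne h.symm, ?_⟩, hu⟩
          rcases (hLmem u).mp hu with ⟨c, hc, rfl⟩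
          rcases (hLmem x).mp hx with ⟨c', hc', rfl⟩
          have he : a + s * c' - (a + s * c) = s * (c' - c) := by ring
          rw [he, isSq_mul_iff hs0 hssq]
          exact hKsq _ (K.sub_mem ((hmemK c').mp hc') ((hmemK c).mp hc))
      rw [hfilter, Finset.card_erase_of_mem ((hLfin_mem x).mpr hx), hLcard]
      have hindx : Set.indicator Lset (fun _ => (1:ℝ)) x = 1 := Set.indicator_of_mem hx (fun _ => (1:ℝ))
      rw [Pi.smul_apply, hindx, smul_eq_mul]
      have hcast : (((q - 1 : ℕ)) : ℝ) = (q : ℝ) - 1 := by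
        push_cast [Nat.cast_sub (le_of_lt hq1)]; ring
      rw [hcast, hSR]
      field_simp
      ring
    · -- x off the clique
      have hy' : (x - a) / s ∉ K := by
        intro h
        apply hx
        rw [hLset]
        exact ⟨(x - a) / s, h, by field_simp; ring⟩
      have hfiltercard : ((G.neighborFinset x).filter (· ∈ Lset)).card = N ((x - a) / s) := by
        refine Finset.card_nbij' (fun u => (u - a) / s) (fun c => a + s * c) ?_ ?_ ?_ ?_
        · intro u hu
          rw [Finset.mem_coe, Finset.mem_filter, SimpleGraph.mem_neighborFinset, hG] at hu
          rcases hu with ⟨⟨hne, hsq⟩, hu⟩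
          rcases (hLmem u).mp hu with ⟨c, hc, rfl⟩
          rw [Finset.mem_coe, Finset.mem_filter]
          constructor
          · show (a + s * c - a) / s ∈ Kfin
            have he : (a + s * c - a) / s = c := by field_simp; ring
            rw [he]; exact hc
          · show IsSquare ((x - a) / s - (a + s * c - a) / s)
            have he : (x - a) / s - (a + s * c - a) / s = s⁻¹ * (x - (a + s * c)) := by
              field_simp; ring
            rw [he, isSq_mul_iff (inv_ne_zero hs0) (isSq_inv hssq)]
            exact hsq
        · intro c hc
          rw [Finset.mem_coe, Finset.mem_filter] at hc
          rcases hc with ⟨hc1, hc2⟩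
          rw [Finset.mem_coe, Finset.mem_filter, SimpleGraph.mem_neighborFinset, hG]
          have he : x - (a + s * c) = s * ((x - a) / s - c) := by field_simp; ring
          have hyc : (x - a) / s - c ≠ 0 := by
            intro h
            apply hy'
            rw [sub_eq_zero.mp h]; exact (hmemK c).mp hc1
          constructor
          · constructor
            · intro h
              apply hyc
              have h2 : x = a + s * c := h
              have h3 : s * ((x - a) / s - c) = 0 := by rw [← he, h2]; ring
              rcases mul_eq_zero.mp h3 with h' | h'
              · exact absurd h' hs0
              · exact h'
            · rw [he, isSq_mul_iff hs0 hssq]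
              rcases eq_or_ne ((x - a) / s - c) 0 with h0 | h0
              · exact absurd h0 hyc
              · -- need IsSquare ((x-a)/s - c); from hc2
                exact hc2
          · rw [hLmem]
            exact ⟨c, hc1, rfl⟩
        · intro u hu
          rw [Finset.mem_coe, Finset.mem_filter] at hu
          rcases (hLmem u).mp hu.2 with ⟨c, hc, rfl⟩
          show a + s * ((a + s * c - a) / s) = a + s * c
          field_simp
          ring
        · intro c hc
          show (a + s * c - a) / s = c
          field_simp
          ring
      rw [hfiltercard, hNR _ hy']
      have hindx : Set.indicator Lset (fun _ => (1:ℝ)) x = 0 := Set.indicator_of_notMem hx (fun _ => (1:ℝ))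
      rw [Pi.smul_apply, hindx, smul_eq_mul, hSR]
      field_simp
      ring
  · -- eigenspace ≤ span
    intro g hg
    rw [Module.End.mem_eigenspace_iff, Matrix.toLin'_apply] at hg
    have hA : ∀ x : F, ∑ w ∈ Sfin, g (x - w) = ((-1 + (q:ℝ)) / 2) * g x := by
      intro x
      have h := congrFun hg x
      rw [SimpleGraph.adjMatrix_mulVec_apply, hnsum x g] at h
      rw [h, Pi.smul_apply, smul_eq_mul]
    -- the sum of g over F is zero
    have hsum0 : ∑ x : F, g x = 0 := by
      have hswap : ∑ x : F, ∑ w ∈ Sfin, g (x - w) = (Sfin.card : ℝ) * ∑ x : F, g x := by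
        rw [Finset.sum_comm]
        have : ∀ w ∈ Sfin, ∑ x : F, g (x - w) = ∑ x : F, g x := by
          intro w _
          exact Finset.sum_nbij' (fun x => x - w) (fun x => x + w)
            (fun x _ => Finset.mem_univ _) (fun x _ => Finset.mem_univ _)
            (fun x _ => by ring) (fun x _ => by ring) (fun x _ => rfl)
        rw [Finset.sum_congr rfl this, Finset.sum_const, nsmul_eq_mul]
      have h1 : ∑ x : F, ∑ w ∈ Sfin, g (x - w) = ((-1 + (q:ℝ)) / 2) * ∑ x : F, g x := by
        rw [Finset.sum_congr rfl (fun x _ => hA x), ← Finset.mul_sum]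
      have h2 : ((Sfin.card : ℝ) - ((-1 + (q:ℝ)) / 2)) * ∑ x : F, g x = 0 := by
        have h3 := hswap.symm.trans h1
        linear_combination h3
      have hq3R : (3:ℝ) ≤ (q:ℝ) := by exact_mod_cast hq3
      have h4 : (Sfin.card : ℝ) - ((-1 + (q:ℝ)) / 2) ≠ 0 := by
        rw [hSR]
        intro hc
        nlinarith
      exact (mul_eq_zero.mp h2).resolve_left h4
    have hq3R : (3:ℝ) ≤ (q:ℝ) := by exact_mod_cast hq3
    have hq10 : (q:ℝ) * ((q:ℝ) - 1) ≠ 0 := by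
      have : (0:ℝ) < (q:ℝ) * ((q:ℝ) - 1) := by nlinarith
      exact ne_of_gt this
    have h0K : (0:F) ∈ Kfin := (hmemK 0).mpr K.zero_mem
    have hKerase : ((Kfin.erase 0).card : ℝ) = (q:ℝ) - 1 := by
      rw [Finset.card_erase_of_mem h0K, hcardKfin, Nat.cast_sub (le_of_lt hq1)]
      norm_num
    have key : ∀ x : F, ∑ s ∈ Sfin, ∑ a : F,
        g a * (Set.indicator {x' : F | ∃ c ∈ K, x' = a + s * c} (fun _ => (1:ℝ)) x - 1 / q)
        = (q : ℝ) * ((q:ℝ) - 1) * g x := by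
      intro x
      have inner : ∀ s ∈ Sfin, ∑ a : F,
          g a * (Set.indicator {x' : F | ∃ c ∈ K, x' = a + s * c} (fun _ => (1:ℝ)) x - 1 / q)
          = ∑ c ∈ Kfin, g (x - s * c) := by
        intro s hs
        rcases (hmemS s).mp hs with ⟨hs0, hssq⟩
        have e1 : ∀ a : F, g a * (Set.indicator {x' : F | ∃ c ∈ K, x' = a + s * c}
            (fun _ => (1:ℝ)) x - 1 / q)
            = (if x ∈ {x' : F | ∃ c ∈ K, x' = a + s * c} then g a else 0) - g a / q := by
          intro a
          rw [Set.indicator_apply]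
          by_cases h : x ∈ {x' : F | ∃ c ∈ K, x' = a + s * c}
          · rw [if_pos h, if_pos h]; ring
          · rw [if_neg h, if_neg h]; ring
        rw [Finset.sum_congr rfl (fun a _ => e1 a), Finset.sum_sub_distrib]
        have e2 : ∑ a : F, g a / q = 0 := by rw [← Finset.sum_div, hsum0, zero_div]
        rw [e2, sub_zero, ← Finset.sum_filter]
        have e3 : Finset.univ.filter (fun a : F => x ∈ {x' : F | ∃ c ∈ K, x' = a + s * c})
            = Kfin.image (fun c => x - s * c) := by
          ext a
          simp only [Finset.mem_filter, Finset.mem_univ, true_and, Finset.mem_image, hmemK,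
            Set.mem_setOf_eq]
          constructor
          · rintro ⟨c, hc, h⟩; exact ⟨c, hc, by rw [h]; ring⟩
          · rintro ⟨c, hc, rfl⟩; exact ⟨c, hc, by ring⟩
        rw [e3, Finset.sum_image (fun c _ d _ h => mul_left_cancel₀ hs0 (sub_right_inj.mp h))]
      rw [Finset.sum_congr rfl inner]
      have split : ∀ s ∈ Sfin, ∑ c ∈ Kfin, g (x - s * c)
          = g x + ∑ c ∈ Kfin.erase 0, g (x - s * c) := by
        intro s _
        rw [← Finset.add_sum_erase Kfin _ h0K, mul_zero, sub_zero]
      rw [Finset.sum_congr rfl split, Finset.sum_add_distrib, Finset.sum_const]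
      have cross : ∑ s ∈ Sfin, ∑ c ∈ Kfin.erase 0, g (x - s * c)
          = ((Kfin.erase 0).card : ℝ) * (((-1 + (q:ℝ)) / 2) * g x) := by
        rw [Finset.sum_comm]
        have e4 : ∀ c ∈ Kfin.erase 0, ∑ s ∈ Sfin, g (x - s * c)
            = ((-1 + (q:ℝ)) / 2) * g x := by
          intro c hc
          rcases Finset.mem_erase.mp hc with ⟨hc0, hcK⟩
          rw [hmemK] at hcK
          have hbij : ∑ t ∈ Sfin, g (x - t * c) = ∑ w ∈ Sfin, g (x - w) := by
            refine Finset.sum_nbij' (fun t => t * c) (fun w => w / c) ?_ ?_ ?_ ?_ ?_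
            · intro t ht
              rcases (hmemS t).mp ht with ⟨ht0, htsq⟩
              exact (hmemS _).mpr ⟨mul_ne_zero ht0 hc0, htsq.mul (hKsq c hcK)⟩
            · intro w hw
              rcases (hmemS w).mp hw with ⟨hw0, hwsq⟩
              refine (hmemS _).mpr ⟨div_ne_zero hw0 hc0, ?_⟩
              show IsSquare (w / c)
              rw [div_eq_mul_inv]
              exact hwsq.mul (isSq_inv (hKsq c hcK))
            · intro t _
              show t * c / c = t
              field_simp
            · intro w _
              show w / c * c = w
              field_simp
            · intro t _; rfl
          rw [hbij, hA x]
        rw [Finset.sum_congr rfl e4, Finset.sum_const, nsmul_eq_mul]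
      rw [cross, nsmul_eq_mul, hKerase, hSR]
      ring
    have hrep : g = ∑ s ∈ Sfin, ∑ a : F, (((q:ℝ) * ((q:ℝ) - 1))⁻¹ * g a) •
        (fun γ => Set.indicator {x' : F | ∃ c ∈ K, x' = a + s * c} (fun _ => (1:ℝ)) γ - 1 / q) := by
      funext x
      simp only [Finset.sum_apply, Pi.smul_apply, smul_eq_mul]
      have e1 : ∀ s ∈ Sfin, ∑ a : F, ((q:ℝ) * ((q:ℝ) - 1))⁻¹ * g a *
          (Set.indicator {x' : F | ∃ c ∈ K, x' = a + s * c} (fun _ => (1:ℝ)) x - 1 / q)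
          = ((q:ℝ) * ((q:ℝ) - 1))⁻¹ * ∑ a : F, g a *
          (Set.indicator {x' : F | ∃ c ∈ K, x' = a + s * c} (fun _ => (1:ℝ)) x - 1 / q) := by
        intro s _
        rw [Finset.mul_sum]
        exact Finset.sum_congr rfl fun a _ => by ring
      rw [Finset.sum_congr rfl e1, ← Finset.mul_sum, key x, inv_mul_cancel_left₀ hq10]
    rw [hrep]
    refine Submodule.sum_mem _ (fun s hs => Submodule.sum_mem _ (fun a _ =>
      Submodule.smul_mem _ _ (Submodule.subset_span ?_)))
    rcases (hmemS s).mp hs with ⟨hs0, hssq⟩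
    exact ⟨a, s, hs0, hssq, rfl⟩
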